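/- Let p be prime and suppose h = 1/p + C where C is a rational number whose denominator is not divisible by p. If h = a/(p!·d) with d a positive integer not divisible by p and a an integer, then a ≡ −d (mod p). -/

import Mathlib

theorem numerator_mod_p (p : ℕ) (hp : p.Prime) (C : ℚ) (hC : ¬ p ∣ C.den)
    (d : ℕ) (hd : 0 < d) (hpd : ¬ p ∣ d) (a : ℤ)
    (ha : ((1 : ℚ) / p + C) * ((p.factorial : ℚ) * d) = (a : ℚ)) :
    a ≡ -(d : ℤ) [ZMOD p] := by
  haveI : Fact p.Prime := ⟨hp⟩
  have hp0 : (p : ℚ) ≠ 0 := Nat.cast_ne_zero.mpr hp.pos.ne'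
  have hfac : p.factorial = p * (p - 1).factorial := (Nat.mul_factorial_pred hp.ne_zero).symm
  set k : ℤ := ((p - 1).factorial : ℤ) * d with hk
  -- C * (p * k) = a - k
  have hCk : C * ((p : ℚ) * (k : ℚ)) = (a : ℚ) - (k : ℚ) := by
    have hpk : (p.factorial : ℚ) * d = (p : ℚ) * (k : ℚ) := by
      rw [hfac, hk]; push_cast; ring
    have h1 : (1 : ℚ) / p * ((p : ℚ) * (k : ℚ)) = (k : ℚ) := by
      field_simp
    rw [hpk, add_mul, h1] at ha
    linarith
  -- e := den divides p * k
  have hnum : C.num * ((p : ℤ) * k) = (a - k) * C.den := by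
    have : (C.num : ℚ) * ((p : ℚ) * (k : ℚ)) = ((a : ℚ) - (k : ℚ)) * (C.den : ℚ) := by
      have hC' : (C.num : ℚ) = C * C.den := (Rat.mul_den_eq_num C).symm
      rw [hC', mul_right_comm, hCk]
    exact_mod_cast this
  have hcop1 : IsCoprime (C.den : ℤ) C.num := by
    rw [Int.isCoprime_iff_gcd_eq_one, Int.gcd_comm]
    exact C.reduced
  have hdvd1 : (C.den : ℤ) ∣ (p : ℤ) * k :=
    hcop1.dvd_of_dvd_mul_left ⟨a - k, by linarith [hnum]⟩
  have hcop2 : IsCoprime (C.den : ℤ) (p : ℤ) := by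
    rw [Int.isCoprime_iff_gcd_eq_one, Int.gcd_natCast_natCast]
    exact ((Nat.Prime.coprime_iff_not_dvd hp).mpr hC).symm
  have hdvd2 : (C.den : ℤ) ∣ k := hcop2.dvd_of_dvd_mul_left hdvd1
  obtain ⟨t, ht⟩ := hdvd2
  -- a = k + p * (num * t)
  have key : a = k + (p : ℤ) * (C.num * t) := by
    have hkq : (k : ℚ) = (C.den : ℚ) * (t : ℚ) := by exact_mod_cast congrArg (Int.cast : ℤ → ℚ) ht
    have hC' : C * (C.den : ℚ) = (C.num : ℚ) := Rat.mul_den_eq_num C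
    have hmain : C * ((p : ℚ) * (k : ℚ)) = (p : ℚ) * ((C.num : ℚ) * (t : ℚ)) := by
      rw [hkq]
      linear_combination (p : ℚ) * (t : ℚ) * hC'
    have h2 : (a : ℚ) = ((k + (p:ℤ) * (C.num * t) : ℤ) : ℚ) := by
      push_cast
      linarith [hCk, hmain]
    exact_mod_cast h2
  -- finish with Wilson
  have wilson : ((p - 1).factorial : ℤ) ≡ -1 [ZMOD p] := by
    rw [← ZMod.intCast_eq_intCast_iff]
    push_cast
    exact ZMod.wilsons_lemma p
  have h1 : a ≡ k [ZMOD p] := by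
    rw [key]
    exact (Int.modEq_iff_dvd.mpr ⟨-(C.num * t), by ring⟩)
  have h2 : k ≡ -(d : ℤ) [ZMOD p] := by
    have := wilson.mul_right (d : ℤ)
    simpa [hk] using this
  exact h1.trans h2
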